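/- Let W₁ : ℝ^d → ℂ be measurable with W₁ ∈ L^∞({|x| ≥ 1}) and |W₁(x)| ≤ C(1 + |log|x||) for |x| ≤ 1, and let h ∈ 𝒮(ℝ^d) (Schwartz). Then for every ε > 0 there is C_ε such that for all t ≥ 1, |∫ t^{-d} W₁(x/t) h(x) dx| ≤ C_ε t^{-(d-ε)}. -/

import Mathlib

open MeasureTheory

section Aux
open Set Real


lemma aux_abs_log_abs_integrableOn :
    IntegrableOn (fun t : ℝ => |Real.log (abs t)|) (Set.Icc (-1:ℝ) 1) := by
  have key : ∀ t : ℝ, t ∈ Set.Ioc (0:ℝ) 1 → |Real.log (abs t)| ≤ 2 * t ^ (-(1/2):ℝ) := by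
    intro t ht
    rw [abs_of_pos ht.1, abs_of_nonpos (Real.log_nonpos ht.1.le ht.2)]
    have h1 : Real.log (t ^ (-(1/2):ℝ)) ≤ t ^ (-(1/2):ℝ) - 1 :=
      Real.log_le_sub_one_of_pos (Real.rpow_pos_of_pos ht.1 _)
    rw [Real.log_rpow ht.1] at h1
    nlinarith [Real.rpow_nonneg ht.1.le (-(1/2):ℝ)]
  have h01 : IntervalIntegrable (fun t : ℝ => |Real.log (abs t)|) volume 0 1 := by
    rw [intervalIntegrable_iff_integrableOn_Ioc_of_le zero_le_one]
    have hg : IntegrableOn (fun t : ℝ => 2 * t ^ (-(1/2):ℝ)) (Set.Ioc (0:ℝ) 1) := by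
      have := (intervalIntegral.intervalIntegrable_rpow' (r := -(1/2)) (by norm_num)
        (a := (0:ℝ)) (b := 1)).const_mul (2:ℝ)
      rwa [intervalIntegrable_iff_integrableOn_Ioc_of_le zero_le_one] at this
    refine hg.mono' ?_ ?_
    · exact ((Real.measurable_log.comp measurable_abs).abs).aestronglyMeasurable
    · filter_upwards [ae_restrict_mem measurableSet_Ioc] with t ht
      simpa [abs_of_nonneg (abs_nonneg _)] using key t ht
  have hneg : IntervalIntegrable (fun t : ℝ => |Real.log (abs t)|) volume (-1) 0 := by
    have := (IntervalIntegrable.iff_comp_neg).mp h01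
    simpa [abs_neg] using this.symm
  have := (hneg.trans h01)
  rwa [intervalIntegrable_iff_integrableOn_Icc_of_le (by norm_num)] at this


lemma coord_abs_le_norm {d : ℕ} (x : EuclideanSpace ℝ (Fin d)) (i : Fin d) : |x i| ≤ ‖x‖ := by
  rw [EuclideanSpace.norm_eq]
  calc |x i| = Real.sqrt (|x i| ^ 2) := by rw [Real.sqrt_sq_eq_abs, abs_abs]
  _ ≤ _ := by
      apply Real.sqrt_le_sqrt
      exact Finset.single_le_sum (f := fun j => |x j| ^ 2)
        (fun j _ => sq_nonneg _) (Finset.mem_univ i)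

lemma aux_log_norm_integrableOn_closedBall (d : ℕ) (hd : 1 ≤ d) :
    IntegrableOn (fun x : EuclideanSpace ℝ (Fin d) => |Real.log ‖x‖|)
      (Metric.closedBall 0 1) := by
  haveI : NeZero d := ⟨by omega⟩
  set i0 : Fin d := ⟨0, by omega⟩ with hi0
  -- the box in the pi space
  set Q' : Set (Fin d → ℝ) := Set.univ.pi (fun _ => Set.Icc (-1:ℝ) 1) with hQ'
  set g : Fin d → ℝ → ℝ := fun i t =>
    if i = i0 then Set.indicator (Set.Icc (-1:ℝ) 1) (fun s => |Real.log (abs s)|) t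
    else Set.indicator (Set.Icc (-1:ℝ) 1) (fun _ => (1:ℝ)) t with hg
  have hgi : ∀ i, Integrable (g i) := by
    intro i
    by_cases hi : i = i0 <;> simp only [hg, hi, if_true, if_false, reduceIte] <;>
      rw [integrable_indicator_iff measurableSet_Icc]
    · exact aux_abs_log_abs_integrableOn
    · exact integrableOn_const (by simp [Real.volume_Icc])
  have hprod : Integrable (fun y : Fin d → ℝ => ∏ i, g i (y i)) := .fintype_prod hgi
  have hind : (fun y : Fin d → ℝ => ∏ i, g i (y i)) =
      Set.indicator Q' (fun y => |Real.log (abs (y i0))|) := by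
    funext y
    by_cases hy : y ∈ Q'
    · rw [Set.indicator_of_mem hy]
      have hmem : ∀ i, y i ∈ Set.Icc (-1:ℝ) 1 := fun i => hy i (Set.mem_univ i)
      rw [Finset.prod_eq_single i0]
      · simp [hg, Set.indicator_of_mem (hmem i0)]
      · intro j _ hj
        simp [hg, hj, Set.indicator_of_mem (hmem j)]
      · simp
    · have hy' := hy
      rw [hQ', Set.mem_univ_pi] at hy'
      push_neg at hy'
      obtain ⟨i, hi⟩ := hy'
      rw [Set.indicator_of_notMem hy]
      apply Finset.prod_eq_zero (Finset.mem_univ i)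
      by_cases h' : i = i0
      · subst h'
        simp only [hg, if_pos rfl]
        exact Set.indicator_of_notMem hi _
      · simp only [hg, if_neg h']
        exact Set.indicator_of_notMem hi _
  rw [hind] at hprod
  -- transfer to EuclideanSpace
  have e := (MeasurableEquiv.toLp 2 (Fin d → ℝ)).symm
  have hmp := EuclideanSpace.volume_preserving_symm_measurableEquiv_toLp (Fin d)
  have htrans : Integrable
      ((Set.indicator Q' (fun y => |Real.log (abs (y i0))|)) ∘
        (MeasurableEquiv.toLp 2 (Fin d → ℝ)).symm) volume :=
    (hmp.integrable_comp_emb (MeasurableEquiv.toLp 2 (Fin d → ℝ)).symm.measurableEmbedding).2 hprod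
  -- rewrite the composition as an indicator on E
  set Q : Set (EuclideanSpace ℝ (Fin d)) := {x | ∀ i, x i ∈ Set.Icc (-1:ℝ) 1} with hQ
  have hQmeas : MeasurableSet Q := by
    have : Q = ⋂ i, (fun x : EuclideanSpace ℝ (Fin d) => x i) ⁻¹' (Set.Icc (-1:ℝ) 1) := by
      ext x; simp [hQ]
    rw [this]
    exact MeasurableSet.iInter fun i =>
      ((EuclideanSpace.proj i : EuclideanSpace ℝ (Fin d) →L[ℝ] ℝ).continuous.measurable
        measurableSet_Icc)
  have hcomp : ((Set.indicator Q' (fun y => |Real.log (abs (y i0))|)) ∘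
      (MeasurableEquiv.toLp 2 (Fin d → ℝ)).symm) =
      Set.indicator Q (fun x : EuclideanSpace ℝ (Fin d) => |Real.log (abs (x i0))|) := by
    funext x
    have hx : (MeasurableEquiv.toLp 2 (Fin d → ℝ)).symm x = (x : Fin d → ℝ) := rfl
    simp only [Function.comp_apply, hx]
    by_cases hxQ : x ∈ Q
    · rw [Set.indicator_of_mem hxQ, Set.indicator_of_mem (by rw [hQ', Set.mem_univ_pi]; exact fun i => hxQ i)]
    · rw [Set.indicator_of_notMem hxQ,
        Set.indicator_of_notMem (by rw [hQ', Set.mem_univ_pi]; exact fun hc => hxQ fun i => hc i)]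
  rw [hcomp] at htrans
  have hQint : IntegrableOn
      (fun x : EuclideanSpace ℝ (Fin d) => |Real.log (abs (x i0))|) Q :=
    (integrable_indicator_iff hQmeas).1 htrans
  -- closedBall ⊆ Q
  have hsub : Metric.closedBall (0 : EuclideanSpace ℝ (Fin d)) 1 ⊆ Q := by
    intro x hx
    rw [Metric.mem_closedBall, dist_zero_right] at hx
    intro i
    have := (coord_abs_le_norm x i).trans hx
    exact abs_le.1 this
  -- the hyperplane x i0 = 0 is null
  have hnull : volume {x : EuclideanSpace ℝ (Fin d) | x i0 = 0} = 0 := by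
    have : {x : EuclideanSpace ℝ (Fin d) | x i0 = 0} =
        (LinearMap.ker (EuclideanSpace.projₗ i0 : EuclideanSpace ℝ (Fin d) →ₗ[ℝ] ℝ) :
          Set (EuclideanSpace ℝ (Fin d))) := by
      ext x
      constructor
      · intro hx
        exact LinearMap.mem_ker.2 hx
      · intro hx
        exact LinearMap.mem_ker.1 hx
    rw [this]
    apply Measure.addHaar_submodule
    intro htop
    have h1 : (EuclideanSpace.single i0 (1:ℝ) : EuclideanSpace ℝ (Fin d)) ∈
        LinearMap.ker (EuclideanSpace.projₗ i0 : EuclideanSpace ℝ (Fin d) →ₗ[ℝ] ℝ) := by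
      rw [htop]; trivial
    rw [LinearMap.mem_ker] at h1
    have : (EuclideanSpace.single i0 (1:ℝ) : EuclideanSpace ℝ (Fin d)) i0 = 1 := by
      simp [EuclideanSpace.single_apply]
    simp only [EuclideanSpace.projₗ] at h1
    rw [show ((PiLp.projₗ 2 (fun _ : Fin d => ℝ) i0) (EuclideanSpace.single i0 (1:ℝ))) =
        (EuclideanSpace.single i0 (1:ℝ) : EuclideanSpace ℝ (Fin d)) i0 from rfl, this] at h1
    exact one_ne_zero h1
  -- conclude
  refine ((hQint.mono_set hsub).mono' ?_ ?_)
  · exact ((Real.measurable_log.comp measurable_norm).abs).aestronglyMeasurable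
  · rw [ae_restrict_iff' measurableSet_closedBall]
    have hae : ∀ᵐ x : EuclideanSpace ℝ (Fin d), x i0 ≠ 0 := by
      rw [ae_iff]
      simpa using hnull
    filter_upwards [hae] with x hx0 hxball
    rw [Metric.mem_closedBall, dist_zero_right] at hxball
    have h1 : 0 < |x i0| := abs_pos.2 hx0
    have h2 : |x i0| ≤ ‖x‖ := coord_abs_le_norm x i0
    have h3 : Real.log (abs (x i0)) ≤ Real.log ‖x‖ := Real.log_le_log h1 h2
    have h4 : Real.log ‖x‖ ≤ 0 := Real.log_nonpos (norm_nonneg _) hxball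
    rw [Real.norm_eq_abs, abs_abs, abs_of_nonpos h4, abs_of_nonpos (h3.trans h4)]
    linarith


lemma aux_key (d : ℕ) (hd : 1 ≤ d) (h : SchwartzMap (EuclideanSpace ℝ (Fin d)) ℂ) :
    Integrable (fun x : EuclideanSpace ℝ (Fin d) => |Real.log ‖x‖| * ‖h x‖) := by
  have hmeasf : AEStronglyMeasurable
      (fun x : EuclideanSpace ℝ (Fin d) => |Real.log ‖x‖| * ‖h x‖) volume :=
    (((Real.measurable_log.comp measurable_norm).abs).mul
      h.continuous.measurable.norm).aestronglyMeasurable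
  set M := (SchwartzMap.seminorm ℝ 0 0) h with hM
  have hMb : ∀ x, ‖h x‖ ≤ M := fun x => SchwartzMap.norm_le_seminorm ℝ h x
  rw [← integrableOn_univ]
  have hcover : (Set.univ : Set (EuclideanSpace ℝ (Fin d))) ⊆
      Metric.closedBall 0 1 ∪ (Metric.closedBall 0 1)ᶜ := by
    intro x _; exact (em _).imp id id
  refine (IntegrableOn.union ?_ ?_).mono_set hcover
  · refine ((aux_log_norm_integrableOn_closedBall d hd).mul_const M).mono'
      hmeasf.restrict ?_
    refine Filter.Eventually.of_forall fun x => ?_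
    rw [Real.norm_eq_abs, abs_of_nonneg (mul_nonneg (abs_nonneg _) (norm_nonneg _))]
    exact mul_le_mul_of_nonneg_left (hMb x) (abs_nonneg _)
  · refine ((h.integrable_pow_mul volume 1).integrableOn).mono' hmeasf.restrict ?_
    rw [ae_restrict_iff' measurableSet_closedBall.compl]
    refine Filter.Eventually.of_forall fun x hx => ?_
    have hx1 : 1 ≤ ‖x‖ := by
      simp only [Set.mem_compl_iff, Metric.mem_closedBall, dist_zero_right, not_le] at hx
      exact hx.le
    rw [Real.norm_eq_abs, abs_of_nonneg (mul_nonneg (abs_nonneg _) (norm_nonneg _))]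
    have hlog : |Real.log ‖x‖| ≤ ‖x‖ ^ 1 := by
      rw [abs_of_nonneg (Real.log_nonneg hx1), pow_one]
      have := Real.log_le_sub_one_of_pos (lt_of_lt_of_le one_pos hx1)
      linarith
    exact mul_le_mul_of_nonneg_right hlog (norm_nonneg _)


end Aux

open Set Real in
/-- Estimate (4.13): if `W₁` is bounded for `|x| ≥ 1` and has at most a logarithmic
singularity for `|x| ≤ 1`, then for Schwartz `h` and every `ε > 0`,
`|∫ t^{-d} W₁(x/t) h(x) dx| ≤ C_ε t^{-(d-ε)}` for all `t ≥ 1`. -/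
theorem log_singularity_decay_estimate
    (d : ℕ) (hd : 1 ≤ d)
    (W₁ : EuclideanSpace ℝ (Fin d) → ℂ) (hmeas : Measurable W₁)
    (C : ℝ) (hC : 0 < C)
    (hout : ∀ x : EuclideanSpace ℝ (Fin d), 1 ≤ ‖x‖ → ‖W₁ x‖ ≤ C)
    (hin : ∀ x : EuclideanSpace ℝ (Fin d), ‖x‖ ≤ 1 → ‖W₁ x‖ ≤ C * (1 + |Real.log ‖x‖|))
    (h : SchwartzMap (EuclideanSpace ℝ (Fin d)) ℂ) :
    ∀ ε : ℝ, 0 < ε → ∃ Cε : ℝ, 0 < Cε ∧ ∀ t : ℝ, 1 ≤ t →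
      ‖∫ x : EuclideanSpace ℝ (Fin d),
          ((t ^ (-(d : ℝ)) : ℝ) : ℂ) * W₁ (t⁻¹ • x) * h x‖
        ≤ Cε * t ^ (-((d : ℝ) - ε)) := by
  intro ε hε
  set A := ∫ x : EuclideanSpace ℝ (Fin d), |Real.log ‖x‖| * ‖h x‖ with hA
  set B := ∫ x : EuclideanSpace ℝ (Fin d), ‖h x‖ with hB
  have hAnn : 0 ≤ A := integral_nonneg fun x => mul_nonneg (abs_nonneg _) (norm_nonneg _)
  have hBnn : 0 ≤ B := integral_nonneg fun x => norm_nonneg _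
  have hAint : Integrable (fun x : EuclideanSpace ℝ (Fin d) => |Real.log ‖x‖| * ‖h x‖) :=
    aux_key d hd h
  have hBint : Integrable (fun x : EuclideanSpace ℝ (Fin d) => ‖h x‖) := h.integrable.norm
  refine ⟨C * ((1 + 1/ε) * B + A) + 1, by positivity, fun t ht => ?_⟩
  have ht0 : (0:ℝ) < t := lt_of_lt_of_le one_pos ht
  have hr0 : (0:ℝ) < t ^ (-(d:ℝ)) := Real.rpow_pos_of_pos ht0 _
  have hlogt : 0 ≤ Real.log t := Real.log_nonneg ht
  -- pointwise bound for W₁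
  have hW : ∀ x : EuclideanSpace ℝ (Fin d),
      ‖W₁ (t⁻¹ • x)‖ ≤ C * (1 + Real.log t + |Real.log ‖x‖|) := by
    intro x
    have hyn : ‖t⁻¹ • x‖ = t⁻¹ * ‖x‖ := by
      rw [norm_smul, Real.norm_eq_abs, abs_of_pos (inv_pos.2 ht0)]
    by_cases hcase : 1 ≤ ‖t⁻¹ • x‖
    · refine (hout _ hcase).trans ?_
      nlinarith [abs_nonneg (Real.log ‖x‖)]
    · push_neg at hcase
      refine (hin _ hcase.le).trans ?_
      have hlb : |Real.log ‖t⁻¹ • x‖| ≤ Real.log t + |Real.log ‖x‖| := by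
        by_cases hx0 : ‖x‖ = 0
        · rw [hyn, hx0, mul_zero, Real.log_zero, abs_zero]
          positivity
        · have hlogy : Real.log ‖t⁻¹ • x‖ = -Real.log t + Real.log ‖x‖ := by
            rw [hyn, Real.log_mul (inv_ne_zero ht0.ne') hx0, Real.log_inv]
          rw [hlogy]
          calc |(-Real.log t + Real.log ‖x‖)| ≤ |(-Real.log t)| + |Real.log ‖x‖| :=
                abs_add_le _ _
          _ = Real.log t + |Real.log ‖x‖| := by rw [abs_neg, abs_of_nonneg hlogt]
      exact mul_le_mul_of_nonneg_left (by linarith) hC.le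
  -- the dominating function
  set g : EuclideanSpace ℝ (Fin d) → ℝ := fun x =>
    (t ^ (-(d:ℝ)) * C) * ((1 + Real.log t) * ‖h x‖ + |Real.log ‖x‖| * ‖h x‖) with hgdef
  have hgint : Integrable g := ((hBint.const_mul (1 + Real.log t)).add hAint).const_mul _
  have hbound : ∀ x : EuclideanSpace ℝ (Fin d),
      ‖((t ^ (-(d : ℝ)) : ℝ) : ℂ) * W₁ (t⁻¹ • x) * h x‖ ≤ g x := by
    intro x
    rw [norm_mul, norm_mul, Complex.norm_real, Real.norm_eq_abs, abs_of_pos hr0]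
    calc t ^ (-(d:ℝ)) * ‖W₁ (t⁻¹ • x)‖ * ‖h x‖
        ≤ t ^ (-(d:ℝ)) * (C * (1 + Real.log t + |Real.log ‖x‖|)) * ‖h x‖ := by
          gcongr
          exact hW x
      _ = g x := by simp only [hgdef]; ring
  have hInt : ‖∫ x : EuclideanSpace ℝ (Fin d),
      ((t ^ (-(d : ℝ)) : ℝ) : ℂ) * W₁ (t⁻¹ • x) * h x‖ ≤ ∫ x, g x :=
    norm_integral_le_of_norm_le hgint (Filter.Eventually.of_forall hbound)
  have hgval : ∫ x, g x = (t ^ (-(d:ℝ)) * C) * ((1 + Real.log t) * B + A) := by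
    simp only [hgdef]
    rw [MeasureTheory.integral_const_mul, integral_add (hBint.const_mul _) hAint, MeasureTheory.integral_const_mul]
  rw [hgval] at hInt
  refine hInt.trans ?_
  -- final elementary estimate
  have hte : (1:ℝ) ≤ t ^ ε := Real.one_le_rpow ht hε.le
  have hlogle : Real.log t ≤ t ^ ε / ε := by
    have h1 : Real.log (t ^ ε) ≤ t ^ ε - 1 :=
      Real.log_le_sub_one_of_pos (Real.rpow_pos_of_pos ht0 _)
    rw [Real.log_rpow ht0] at h1
    rw [le_div_iff₀ hε]
    nlinarith
  have hsplit : t ^ (-((d:ℝ) - ε)) = t ^ (-(d:ℝ)) * t ^ ε := by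
    rw [← Real.rpow_add ht0]
    ring_nf
  rw [hsplit]
  calc (t ^ (-(d:ℝ)) * C) * ((1 + Real.log t) * B + A)
      ≤ (t ^ (-(d:ℝ)) * C) * (((1 + 1/ε) * t ^ ε) * B + t ^ ε * A) := by
        gcongr
        · have : (1:ℝ) + Real.log t ≤ t ^ ε + t ^ ε / ε := by linarith
          calc (1:ℝ) + Real.log t ≤ t ^ ε + t ^ ε / ε := this
          _ = (1 + 1/ε) * t ^ ε := by field_simp
        · nlinarith
    _ = (C * ((1 + 1/ε) * B + A)) * (t ^ (-(d:ℝ)) * t ^ ε) := by ring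
    _ ≤ (C * ((1 + 1/ε) * B + A) + 1) * (t ^ (-(d:ℝ)) * t ^ ε) := by
        have : (0:ℝ) < t ^ (-(d:ℝ)) * t ^ ε := by positivity
        nlinarith
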